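/- Consider partial functions with the pointwise refinement order. (i) A partial function f : α →. β is laxly weakly orthogonal to every total partial function (with arbitrary source and target) if and only if f is injective on its domain. (ii) A partial function g : γ →. δ is such that every partial function that is injective on its domain is laxly weakly orthogonal to g if and only if g is total. Hence (injective-on-domain, total) is a lax weak factorisation system on partial functions. -/

import Mathlib

universe u

/-- `f ≤ g` pointwise: every value of `f a` is a value of `g a`. -/
def PFunLE {α β : Type u} (f g : α →. β) : Prop := ∀ a, f a ≤ g a

/-- `f` is total: defined everywhere. -/
def PFun.Total {α β : Type u} (f : α →. β) : Prop := ∀ a, (f a).Dom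

/-- `f` is injective on its domain. -/
def PFun.InjOnDom {α β : Type u} (f : α →. β) : Prop :=
  ∀ ⦃a a' : α⦄ ⦃b : β⦄, b ∈ f a → b ∈ f a' → a = a'

/-- `f` is laxly weakly orthogonal to `g`: every lax square `(u, v) : f → g`
(`g.comp u ≤ v.comp f`) admits a lax diagonal. -/
def PFun.LaxOrthP {α β γ δ : Type u} (f : α →. β) (g : γ →. δ) : Prop :=
  ∀ (u : α →. γ) (v : β →. δ), PFunLE (g.comp u) (v.comp f) →
    ∃ d : β →. γ, PFunLE u (d.comp f) ∧ PFunLE (g.comp d) v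

lemma mem_comp' {α β γ : Type u} {f : β →. γ} {g : α →. β} {a : α} {c : γ} :
    c ∈ f.comp g a ↔ ∃ b, b ∈ g a ∧ c ∈ f b := by
  simp [PFun.comp_apply, Part.mem_bind_iff]
  exact Part.mem_bind_iff

lemma lax_of_inj {α β γ δ : Type u} {f : α →. β} (hf : PFun.InjOnDom f)
    {g : γ →. δ} (hg : PFun.Total g) : PFun.LaxOrthP f g := by
  classical
  intro u v hsq
  refine ⟨fun b => Part.assert (∃ a, b ∈ f a) (fun h => u h.choose), ?_, ?_⟩
  · intro a c hc
    -- first: f a is defined, using the square and totality of g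
    have he : (g c).get (hg c) ∈ PFun.comp g u a :=
      mem_comp'.2 ⟨c, hc, Part.get_mem _⟩
    obtain ⟨b, hb, -⟩ := mem_comp'.1 (hsq a _ he)
    refine mem_comp'.2 ⟨b, hb, ?_⟩
    refine Part.mem_assert_iff.2 ⟨⟨a, hb⟩, ?_⟩
    have : (⟨a, hb⟩ : ∃ a, b ∈ f a).choose = a :=
      hf (⟨a, hb⟩ : ∃ a, b ∈ f a).choose_spec hb
    rwa [this]
  · intro b e he
    obtain ⟨c, hc, hec⟩ := mem_comp'.1 he
    obtain ⟨h, hcu⟩ := Part.mem_assert_iff.1 hc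
    have hbf : b ∈ f h.choose := h.choose_spec
    have : e ∈ PFun.comp g u h.choose := mem_comp'.2 ⟨c, hcu, hec⟩
    obtain ⟨b', hb', hev⟩ := mem_comp'.1 (hsq _ _ this)
    rwa [Part.mem_unique hb' hbf] at hev

theorem stmt13 :
    (∀ {α β : Type u} (f : α →. β),
      (∀ {γ δ : Type u} (g : γ →. δ), PFun.Total g → PFun.LaxOrthP f g) ↔
        PFun.InjOnDom f) ∧
    (∀ {γ δ : Type u} (g : γ →. δ),
      (∀ {α β : Type u} (f : α →. β), PFun.InjOnDom f → PFun.LaxOrthP f g) ↔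
        PFun.Total g) ∧
    (∀ {α β : Type u} (f : α →. β), ∃ (κ : Type u) (l : α →. κ) (r : κ →. β),
      f = r.comp l ∧ PFun.InjOnDom l ∧ PFun.Total r) := by
  refine ⟨?_, ?_, ?_⟩
  · intro α β f
    constructor
    · intro h a a' b hb hb'
      -- square with g : α →. PUnit total, u the restriction of the identity
      obtain ⟨d, hd, -⟩ := h (fun _ : α => Part.some PUnit.unit) (fun _ => trivial)
        (fun a => Part.assert (f a).Dom (fun _ => Part.some a))
        (fun _ : β => Part.some PUnit.unit)
        (by
          intro a e he
          obtain ⟨x, hx, -⟩ := mem_comp'.1 he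
          obtain ⟨hdom, -⟩ := Part.mem_assert_iff.1 hx
          exact mem_comp'.2 ⟨(f a).get hdom, Part.get_mem _,
            by simpa using Subsingleton.elim e PUnit.unit⟩)
      have mem_u : ∀ x : α, (f x).Dom →
          x ∈ Part.assert (f x).Dom (fun _ => Part.some x) := fun x hx =>
        Part.mem_assert_iff.2 ⟨hx, by simp⟩
      have key : ∀ x : α, b ∈ f x → x ∈ d b := by
        intro x hx
        obtain ⟨b₀, hb₀, hxd⟩ := mem_comp'.1 (hd x x (mem_u x ((Part.dom_iff_mem).2 ⟨b, hx⟩)))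
        rwa [Part.mem_unique hb₀ hx] at hxd
      exact Part.mem_unique (key a hb) (key a' hb')
    · intro hf γ δ g hg
      exact lax_of_inj hf hg
  · intro γ δ g
    constructor
    · intro h c
      by_contra hc
      -- f : PUnit →. PUnit everywhere undefined, u constantly c
      obtain ⟨d, hd, -⟩ := h (fun _ : PUnit.{u+1} => (Part.none : Part PUnit.{u+1}))
        (by intro a a' b hb _; exact absurd hb (Part.notMem_none b))
        (fun _ => Part.some c) (fun _ => Part.none)
        (by
          intro a e he
          obtain ⟨c', hc', hec⟩ := mem_comp'.1 he
          rw [Part.mem_some_iff.1 hc'] at hec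
          exact absurd ((Part.dom_iff_mem).2 ⟨e, hec⟩) hc)
      have := hd PUnit.unit c (by simp)
      obtain ⟨b, hb, -⟩ := mem_comp'.1 this
      exact Part.notMem_none b hb
    · intro hg α β f hf
      exact lax_of_inj hf hg
  · intro α β f
    refine ⟨{a : α // (f a).Dom}, fun a => Part.assert (f a).Dom (fun h => Part.some ⟨a, h⟩),
      fun x => Part.some ((f x.1).get x.2), ?_, ?_, fun _ => trivial⟩
    · apply PFun.ext
      intro a b
      constructor
      · intro hb
        have hdom : (f a).Dom := (Part.dom_iff_mem).2 ⟨b, hb⟩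
        exact mem_comp'.2 ⟨⟨a, hdom⟩,
          Part.mem_assert_iff.2 ⟨hdom, by simp⟩,
          Part.mem_some_iff.2 (Part.get_eq_of_mem hb hdom).symm⟩
      · intro hb
        obtain ⟨x, hx, hbx⟩ := mem_comp'.1 hb
        obtain ⟨h, hx'⟩ := Part.mem_assert_iff.1 hx
        rw [Part.mem_some_iff.1 hx'] at hbx
        simp only [Part.mem_some_iff] at hbx
        rw [hbx]
        exact Part.get_mem _
    · intro a a' b hb hb'
      simp only [Part.mem_assert_iff, Part.mem_some_iff] at hb hb'
      obtain ⟨h1, e1⟩ := hb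
      obtain ⟨h2, e2⟩ := hb'
      exact congrArg Subtype.val (e1.symm.trans e2)
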